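/- Let s be a nonzero integer, n ≥ 2, and set M_n* = u_1·u_2⋯u_n, where u_i is Sylvester's sequence. If gcd(s, M_n*) = 1, then the equation 1/x_1 + ⋯ + 1/x_n = s/(x_1·x_2⋯x_n) has infinitely many solutions in nonzero integers (x_1, …, x_n) satisfying min_i |x_i| ≥ 2 and gcd(x_1·x_2⋯x_n, s) = 1. -/

import Mathlib

open Finset


private def Pa (t : ℤ) : ℕ → ℤ
  | 0 => 1
  | 1 => t
  | (k+2) => Pa t (k+1) * (1 - Pa t (k+1))

private lemma Pa_succ (t : ℤ) (k : ℕ) (hk : 1 ≤ k) :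
    Pa t (k+1) = Pa t k * (1 - Pa t k) := by
  match k, hk with
  | (m+1), _ => rfl

private def xv (t : ℤ) (i : ℕ) : ℤ := if i = 0 then t else 1 - Pa t i

private def yv (s t : ℤ) (n : ℕ) (j : ℕ) : ℤ :=
  if j + 1 = n then s - Pa t (n-1) else xv t j

private lemma Pa_big (t : ℤ) (ht : 3 ≤ t) : ∀ k, 1 ≤ k → t ≤ |Pa t k| := by
  intro k hk
  induction k with
  | zero => omega
  | succ m ih =>
    rcases Nat.lt_or_ge m 1 with h | hm
    · have : m = 0 := by omega
      subst this
      show t ≤ |Pa t 1|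
      have : Pa t 1 = t := rfl
      rw [this, abs_of_nonneg (by omega)]
    · have h1 := ih hm
      rw [Pa_succ t m hm, abs_mul]
      have h2 : 1 ≤ |1 - Pa t m| := by
        rcases abs_cases (Pa t m) with ⟨he, _⟩ | ⟨he, _⟩ <;>
          rcases abs_cases (1 - Pa t m) with ⟨hf, _⟩ | ⟨hf, _⟩ <;> omega
      nlinarith [abs_nonneg (Pa t m)]

private lemma xv_prod (t : ℤ) : ∀ k, 1 ≤ k → ∏ i ∈ Finset.range k, xv t i = Pa t k := by
  intro k hk
  induction k with
  | zero => omega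
  | succ m ih =>
    rcases Nat.lt_or_ge m 1 with h | hm
    · have : m = 0 := by omega
      subst this
      simp [xv, Pa]
    · rw [Finset.prod_range_succ, ih hm, Pa_succ t m hm]
      congr 1
      have hm0 : m ≠ 0 := by omega
      simp [xv, hm0]

private lemma xv_sum (t : ℤ) (ht : 3 ≤ t) :
    ∀ k, 1 ≤ k → ∑ i ∈ Finset.range k, ((xv t i : ℚ))⁻¹ = ((Pa t k : ℤ) : ℚ)⁻¹ := by
  intro k hk
  induction k with
  | zero => omega
  | succ m ih =>
    rcases Nat.lt_or_ge m 1 with h | hm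
    · have : m = 0 := by omega
      subst this
      simp [xv, Pa]
    · have hP := Pa_big t ht m hm
      have hP0 : Pa t m ≠ 0 := by
        intro h; rw [h] at hP; simp at hP; omega
      have hP1 : (1 : ℤ) - Pa t m ≠ 0 := by
        intro h
        have : Pa t m = 1 := by omega
        rw [this] at hP; simp at hP; omega
      have hQ0 : ((Pa t m : ℤ) : ℚ) ≠ 0 := by exact_mod_cast hP0
      have hQ1 : ((1 : ℚ) - ((Pa t m : ℤ) : ℚ)) ≠ 0 := by
        intro h
        apply hP1
        have : ((1 - Pa t m : ℤ) : ℚ) = 0 := by push_cast; linarith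
        exact_mod_cast this
      rw [Finset.sum_range_succ, ih hm, Pa_succ t m hm]
      have hx : xv t m = 1 - Pa t m := by
        have hm0 : m ≠ 0 := by omega
        simp [xv, hm0]
      rw [hx]
      push_cast
      field_simp
      ring

private lemma coprime_of_dvd_sub {s a b : ℤ} (h : s ∣ a - b) (hb : IsCoprime s b) :
    IsCoprime s a := by
  obtain ⟨c, hc⟩ := h
  have : a = b + s * c := by linarith
  rw [this]
  exact hb.add_mul_left_right c

private lemma u_eq (u : ℕ → ℤ) (hu1 : u 1 = 2)
    (hu : ∀ k, 1 ≤ k → u (k + 1) = (∏ i ∈ Finset.Icc 1 k, u i) + 1) :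
    ∀ k, 1 ≤ k → u k = (∏ i ∈ Finset.Icc 1 (k-1), u i) + 1 := by
  intro k hk
  match k, hk with
  | 1, _ =>
    rw [show (1:ℕ) - 1 = 0 from rfl, Finset.Icc_eq_empty (by omega)]
    simp [hu1]
  | (m+2), _ =>
    have := hu (m+1) (by omega)
    simpa using this

private lemma Pa_mod (s t : ℤ) (u : ℕ → ℤ) (hu1 : u 1 = 2)
    (hu : ∀ k, 1 ≤ k → u (k + 1) = (∏ i ∈ Finset.Icc 1 k, u i) + 1)
    (hts : s ∣ t + 1) :
    ∀ k, 1 ≤ k → s ∣ Pa t k + ∏ i ∈ Finset.Icc 1 (k-1), u i := by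
  intro k hk
  induction k with
  | zero => omega
  | succ m ih =>
    rcases Nat.lt_or_ge m 1 with h | hm
    · have : m = 0 := by omega
      subst this
      show s ∣ Pa t 1 + ∏ i ∈ Finset.Icc 1 0, u i
      rw [Finset.Icc_eq_empty (by omega)]
      have : Pa t 1 = t := rfl
      rw [this]
      simpa using hts
    · set R : ℤ := ∏ i ∈ Finset.Icc 1 (m-1), u i with hR
      obtain ⟨c, hc⟩ := ih hm
      have hum : u m = R + 1 := u_eq u hu1 hu m hm
      have hprod : (∏ i ∈ Finset.Icc 1 m, u i) = R * (R + 1) := by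
        have h1 : (∏ i ∈ Finset.Icc 1 ((m-1)+1), u i)
            = (∏ i ∈ Finset.Icc 1 (m-1), u i) * u ((m-1)+1) :=
          Finset.prod_Icc_succ_top (by omega) u
        rw [show (m-1)+1 = m from by omega] at h1
        rw [h1, ← hR, hum]
      rw [show m + 1 - 1 = m from by omega, hprod, Pa_succ t m hm]
      refine ⟨c*(1+2*R) - s*c^2, ?_⟩
      have hPm : Pa t m = s*c - R := by linarith
      rw [hPm]; ring

private lemma yv_prod (s t : ℤ) (m : ℕ) :
    ∏ j ∈ Finset.range (m+2), yv s t (m+2) j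
      = Pa t (m+1) * (s - Pa t (m+1)) := by
  rw [Finset.prod_range_succ]
  have h1 : ∏ j ∈ Finset.range (m+1), yv s t (m+2) j
      = ∏ j ∈ Finset.range (m+1), xv t j := by
    refine Finset.prod_congr rfl (fun j hj => ?_)
    have : j < m + 1 := Finset.mem_range.mp hj
    have hne : j + 1 ≠ m + 2 := by omega
    simp [yv, hne, show j ≠ m + 1 by omega]
  rw [h1, xv_prod t (m+1) (by omega)]
  simp [yv]

private lemma yv_sum (s t : ℤ) (ht : 3 ≤ t) (m : ℕ) :
    ∑ j ∈ Finset.range (m+2), ((yv s t (m+2) j : ℤ) : ℚ)⁻¹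
      = ((Pa t (m+1) : ℤ) : ℚ)⁻¹ + ((s - Pa t (m+1) : ℤ) : ℚ)⁻¹ := by
  rw [Finset.sum_range_succ]
  have h1 : ∑ j ∈ Finset.range (m+1), ((yv s t (m+2) j : ℤ) : ℚ)⁻¹
      = ∑ j ∈ Finset.range (m+1), ((xv t j : ℤ) : ℚ)⁻¹ := by
    refine Finset.sum_congr rfl (fun j hj => ?_)
    have : j < m + 1 := Finset.mem_range.mp hj
    have hne : j + 1 ≠ m + 2 := by omega
    simp [yv, hne, show j ≠ m + 1 by omega]
  rw [h1, xv_sum t ht (m+1) (by omega)]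
  simp [yv]

/-- **Theorem 4.2(2).** If `gcd(s, u_1 u_2 ⋯ u_n) = 1` where
`u` is Sylvester's sequence, then `1/x_1 + ⋯ + 1/x_n = s/(x_1 ⋯ x_n)` has
infinitely many solutions in nonzero integers with all `|x_i| ≥ 2` and
`gcd(x_1 ⋯ x_n, s) = 1`. -/
theorem solutions_m_zero_sylvester_modulus
    (s : ℤ) (hs : s ≠ 0) (n : ℕ) (hn : 2 ≤ n)
    (u : ℕ → ℤ) (hu1 : u 1 = 2)
    (hu : ∀ k, 1 ≤ k → u (k + 1) = (∏ i ∈ Finset.Icc 1 k, u i) + 1)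
    (hgcd : Int.gcd s (∏ i ∈ Finset.Icc 1 n, u i) = 1) :
    {x : Fin n → ℤ |
        (∀ i, 2 ≤ |x i|) ∧
        (∑ i, ((x i : ℚ))⁻¹) = (s : ℚ) / (∏ i, (x i : ℚ)) ∧
        Int.gcd (∏ i, x i) s = 1}.Infinite := by
  obtain ⟨m, rfl⟩ : ∃ m, n = m + 2 := ⟨n - 2, by omega⟩
  have hco : IsCoprime s (∏ i ∈ Finset.Icc 1 (m+2), u i) :=
    Int.isCoprime_iff_gcd_eq_one.mpr hgcd
  have hcu : ∀ k, 1 ≤ k → k ≤ m + 2 → IsCoprime s (u k) := fun k h1 h2 =>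
    hco.of_isCoprime_of_dvd_right (Finset.dvd_prod_of_mem u (Finset.mem_Icc.mpr ⟨h1, h2⟩))
  have hcR : ∀ k, k ≤ m + 2 → IsCoprime s (∏ i ∈ Finset.Icc 1 k, u i) := fun k h2 =>
    hco.of_isCoprime_of_dvd_right
      (Finset.prod_dvd_prod_of_subset _ _ u (Finset.Icc_subset_Icc_right h2))
  have hsabs : 1 ≤ |s| := Int.one_le_abs (by omega)
  -- the parameter set
  set T : Set ℤ := {t | |s| + 3 ≤ t ∧ s ∣ t + 1} with hT
  have hTinf : T.Infinite := by
    apply Set.infinite_of_injOn_mapsTo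
      (f := fun k : ℤ => |s| * k - 1) (s := Set.Ici (|s| + 4))
    · intro a _ b _ hab
      have h1 : |s| * a = |s| * b := by
        have : |s| * a - 1 = |s| * b - 1 := hab
        linarith
      exact mul_left_cancel₀ (by omega) h1
    · intro k hk
      have hk' : |s| + 4 ≤ k := hk
      constructor
      · have h2 : |s| * (|s| + 4) ≤ |s| * k := mul_le_mul_of_nonneg_left hk' (abs_nonneg s)
        have h4 : |s| + 4 ≤ |s| * (|s| + 4) := le_mul_of_one_le_left (by omega) hsabs
        show |s| + 3 ≤ |s| * k - 1
        linarith
      · have : s ∣ |s| * k := Dvd.dvd.mul_right ((dvd_abs s s).mpr dvd_rfl) k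
        have he : |s| * k - 1 + 1 = |s| * k := by ring
        rw [he]
        exact this
    · exact Set.Ici_infinite _
  apply Set.infinite_of_injOn_mapsTo
    (f := fun t => fun i : Fin (m+2) => yv s t (m+2) (i : ℕ)) (s := T)
  · intro a ha b hb hab
    have h0 := congrFun hab ⟨0, by omega⟩
    simpa [yv, xv] using h0
  · intro t ht
    obtain ⟨ht3, htd⟩ := ht
    have ht' : 3 ≤ t := by omega
    have hPbig : t ≤ |Pa t (m+1)| := Pa_big t ht' (m+1) (by omega)
    have hP0 : Pa t (m+1) ≠ 0 := by
      intro h; rw [h] at hPbig; simp at hPbig; omega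
    have hSP : 3 ≤ |s - Pa t (m+1)| := by
      have h1 : |Pa t (m+1)| - |s| ≤ |Pa t (m+1) - s| := abs_sub_abs_le_abs_sub _ _
      have h2 : |Pa t (m+1) - s| = |s - Pa t (m+1)| := abs_sub_comm _ _
      omega
    have hSP0 : s - Pa t (m+1) ≠ 0 := by
      intro h; rw [h] at hSP; simp at hSP
    refine ⟨?_, ?_, ?_⟩
    · -- all coordinates have absolute value ≥ 2
      intro i
      show 2 ≤ |yv s t (m+2) (i:ℕ)|
      by_cases hi : (i : ℕ) + 1 = m + 2
      · have hy : yv s t (m+2) (i:ℕ) = s - Pa t (m+1) := by simp [yv, hi]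
        rw [hy]
        omega
      · by_cases hi0 : (i : ℕ) = 0
        · have hy : yv s t (m+2) (i:ℕ) = t := by simp [yv, hi, xv, hi0]
          rw [hy, abs_of_nonneg (by omega)]
          omega
        · have hi1 : 1 ≤ (i : ℕ) := by omega
          have hb := Pa_big t ht' (i : ℕ) hi1
          have hy : yv s t (m+2) (i:ℕ) = 1 - Pa t (i:ℕ) := by simp [yv, hi, xv, hi0, show (i:ℕ) ≠ m + 1 by omega]
          rw [hy]
          have h1 : |Pa t (i:ℕ)| - |(1:ℤ)| ≤ |Pa t (i:ℕ) - 1| := abs_sub_abs_le_abs_sub _ _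
          have h2 : |Pa t (i:ℕ) - 1| = |1 - Pa t (i:ℕ)| := abs_sub_comm _ _
          simp at h1
          omega
    · -- the equation
      show (∑ i : Fin (m+2), ((yv s t (m+2) (i:ℕ) : ℤ) : ℚ)⁻¹)
          = (s : ℚ) / (∏ i : Fin (m+2), ((yv s t (m+2) (i:ℕ) : ℤ) : ℚ))
      have hsum : (∑ i : Fin (m+2), ((yv s t (m+2) (i:ℕ) : ℤ) : ℚ)⁻¹)
          = ∑ j ∈ Finset.range (m+2), ((yv s t (m+2) j : ℤ) : ℚ)⁻¹ :=
        Fin.sum_univ_eq_sum_range (fun j => ((yv s t (m+2) j : ℤ) : ℚ)⁻¹) (m+2)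
      have hprodq : (∏ i : Fin (m+2), ((yv s t (m+2) (i:ℕ) : ℤ) : ℚ))
          = ∏ j ∈ Finset.range (m+2), ((yv s t (m+2) j : ℤ) : ℚ) :=
        Fin.prod_univ_eq_prod_range (fun j => ((yv s t (m+2) j : ℤ) : ℚ)) (m+2)
      have hprodz : (∏ j ∈ Finset.range (m+2), ((yv s t (m+2) j : ℤ) : ℚ))
          = ((Pa t (m+1) * (s - Pa t (m+1)) : ℤ) : ℚ) := by
        rw [← yv_prod s t m]
        push_cast
        rfl
      rw [hsum, hprodq, hprodz, yv_sum s t ht' m]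
      have hQ0 : ((Pa t (m+1) : ℤ) : ℚ) ≠ 0 := by exact_mod_cast hP0
      have hQ1 : ((s - Pa t (m+1) : ℤ) : ℚ) ≠ 0 := by exact_mod_cast hSP0
      push_cast at hQ0 hQ1 ⊢
      field_simp
      ring
    · -- the gcd condition
      show Int.gcd (∏ i : Fin (m+2), yv s t (m+2) (i:ℕ)) s = 1
      have hcop : ∀ i : Fin (m+2), IsCoprime s (yv s t (m+2) (i : ℕ)) := by
        intro i
        by_cases hi : (i : ℕ) + 1 = m + 2
        · have hy : yv s t (m+2) (i:ℕ) = s - Pa t (m+1) := by simp [yv, hi]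
          rw [hy]
          have hd := Pa_mod s t u hu1 hu htd (m+1) (by omega)
          rw [show m + 1 - 1 = m from rfl] at hd
          refine coprime_of_dvd_sub (b := ∏ i ∈ Finset.Icc 1 m, u i) ?_ (hcR m (by omega))
          obtain ⟨c, hc⟩ := hd
          exact ⟨1 - c, by linarith [hc]⟩
        · by_cases hi0 : (i : ℕ) = 0
          · have hy : yv s t (m+2) (i:ℕ) = t := by simp [yv, hi, xv, hi0]
            rw [hy]
            refine coprime_of_dvd_sub (b := (-1 : ℤ)) ?_ (isCoprime_one_right.neg_right)
            simpa [sub_neg_eq_add] using htd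
          · have hi1 : 1 ≤ (i : ℕ) := by omega
            simp only [yv, if_neg hi, xv, if_neg hi0]
            have hd := Pa_mod s t u hu1 hu htd (i : ℕ) hi1
            have hue := u_eq u hu1 hu (i : ℕ) hi1
            refine coprime_of_dvd_sub (b := u (i : ℕ)) ?_ (hcu (i:ℕ) hi1 (by omega))
            obtain ⟨c, hc⟩ := hd
            refine ⟨-c, ?_⟩
            rw [hue]
            linarith [hc]
      have : IsCoprime s (∏ i : Fin (m+2), yv s t (m+2) (i : ℕ)) :=
        IsCoprime.prod_right (fun i _ => hcop i)
      exact Int.isCoprime_iff_gcd_eq_one.mp this.symm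
  · exact hTinf
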